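/- Let f(x) = a_N x^N + ⋯ + a_1 x + a_0 = a_N ∏_{n=1}^N (x − γ_n) be a polynomial with complex coefficients and a_N ≠ 0, and let M(f) = |a_N| ∏_{n=1}^N max{1, |γ_n|} be its Mahler measure. Then for every 0 ≤ n ≤ N, |a_n| ≤ C(N, n) · M(f), where C(N,n) is the binomial coefficient. -/

import Mathlib

open Polynomial

lemma prod_map_norm_le_aux (s : Multiset ℂ) (t : Multiset ℂ) (ht : t ≤ s) :
    (t.map (fun z => ‖z‖)).prod ≤
      (s.map (fun z => max 1 (‖z‖))).prod := by
  have h1 : ∀ u : Multiset ℂ, (u.map (fun z => ‖z‖)).prod ≤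
      (u.map (fun z => max 1 (‖z‖))).prod := by
    intro u
    induction u using Multiset.induction with
    | empty => simp
    | cons a u ih =>
      simp only [Multiset.map_cons, Multiset.prod_cons]
      have h2 : (0:ℝ) ≤ (u.map (fun z => ‖z‖)).prod := by
        apply Multiset.prod_nonneg
        intro x hx
        obtain ⟨z, _, rfl⟩ := Multiset.mem_map.mp hx
        positivity
      exact mul_le_mul (le_max_right _ _) ih h2 (by positivity)
  have h1 := h1 t
  refine h1.trans ?_
  obtain ⟨u, rfl⟩ := Multiset.le_iff_exists_add.mp ht
  rw [Multiset.map_add, Multiset.prod_add]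
  have hu : (1:ℝ) ≤ (u.map (fun z => max 1 (‖z‖))).prod := by
    apply Multiset.one_le_prod
    intro x hx
    obtain ⟨z, _, rfl⟩ := Multiset.mem_map.mp hx
    exact le_max_left _ _
  have hnn : (0:ℝ) ≤ (t.map (fun z => max 1 (‖z‖))).prod := by
    apply Multiset.prod_nonneg
    intro x hx
    obtain ⟨z, _, rfl⟩ := Multiset.mem_map.mp hx
    positivity
  exact le_mul_of_one_le_right hnn hu

lemma esymm_abs_le (s : Multiset ℂ) (k : ℕ) :
    ‖s.esymm k‖ ≤
      (s.card.choose k : ℝ) * (s.map (fun z => max 1 (‖z‖))).prod := by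
  unfold Multiset.esymm
  refine (norm_multiset_sum_le _).trans ?_
  have := Multiset.sum_le_card_nsmul
    (((s.powersetCard k).map Multiset.prod).map norm)
    ((s.map (fun z => max 1 (‖z‖))).prod) ?_
  · simpa [Multiset.card_map, Multiset.card_powersetCard, nsmul_eq_mul] using this
  · intro x hx
    simp only [Multiset.mem_map] at hx
    obtain ⟨y, ⟨t, ht, rfl⟩, rfl⟩ := hx
    rw [Multiset.mem_powersetCard] at ht
    have : ‖t.prod‖ = (t.map (fun z => ‖z‖)).prod := by
      exact Multiset.induction_on t (by simp) (fun a t ih => by simp [ih])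
    rw [this]
    exact prod_map_norm_le_aux s t ht.1

theorem coeff_le_choose_mul_mahler (f : Polynomial ℂ) (hf : f ≠ 0) (n : ℕ)
    (hn : n ≤ f.natDegree) :
    ‖f.coeff n‖ ≤
      (f.natDegree.choose n : ℝ) *
        (‖f.leadingCoeff‖ *
          (f.roots.map (fun z => max 1 (‖z‖))).prod) := by
  have hcard : f.roots.card = f.natDegree :=
    (splits_iff_card_roots).mp (IsAlgClosed.splits f)
  have hprod := C_leadingCoeff_mul_prod_multiset_X_sub_C hcard
  have hn' : n ≤ f.roots.card := hcard ▸ hn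
  have hcoeff : f.coeff n =
      f.leadingCoeff * ((-1 : ℂ) ^ (f.roots.card - n) * f.roots.esymm (f.roots.card - n)) := by
    conv_lhs => rw [← hprod]
    rw [coeff_C_mul, Multiset.prod_X_sub_C_coeff _ hn']
  rw [hcoeff, norm_mul, norm_mul, norm_pow, norm_neg, norm_one, one_pow, one_mul]
  have hbound := esymm_abs_le f.roots (f.roots.card - n)
  rw [Nat.choose_symm hn'] at hbound
  rw [← hcard]
  calc ‖f.leadingCoeff‖ * ‖f.roots.esymm (f.roots.card - n)‖
      ≤ ‖f.leadingCoeff‖ *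
        (((Multiset.card f.roots).choose n : ℝ) * (f.roots.map (fun z => max 1 (‖z‖))).prod) :=
        mul_le_mul_of_nonneg_left hbound (norm_nonneg _)
    _ = ((Multiset.card f.roots).choose n : ℝ) *
        (‖f.leadingCoeff‖ * (f.roots.map (fun z => max 1 (‖z‖))).prod) := by
        ring
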